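/- The triple (α₋₁, α₀, α₁) is a ℤ-basis of the lattice S₂(ℤ), and its Gram matrix with respect to B is the Cartan matrix of F: B(α₋₁,α₋₁) = B(α₀,α₀) = B(α₁,α₁) = 2, B(α₋₁,α₀) = B(α₀,α₋₁) = −1, B(α₋₁,α₁) = B(α₁,α₋₁) = 0, and B(α₀,α₁) = B(α₁,α₀) = −2. Hence the root lattice of F, with the bilinear form determined by its Cartan matrix [[2,−1,0],[−1,2,−2],[0,−2,2]], is isometric to S₂(ℤ). -/

import Mathlib

/-- The symmetric bilinear form `B(N,N') = 2bb' - ac' - a'c` on 2×2 matrices. -/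
def B (N M : Matrix (Fin 2) (Fin 2) ℤ) : ℤ :=
  2 * N 0 1 * M 0 1 - N 0 0 * M 1 1 - M 0 0 * N 1 1

/-- The simple root `α₋₁` of `F`. -/
def αm : Matrix (Fin 2) (Fin 2) ℤ := !![1, 0; 0, -1]

/-- The simple root `α₀` of `F`. -/
def α0 : Matrix (Fin 2) (Fin 2) ℤ := !![-1, -1; -1, 0]

/-- The simple root `α₁` of `F`. -/
def α1 : Matrix (Fin 2) (Fin 2) ℤ := !![0, 1; 1, 0]

/-- `(α₋₁, α₀, α₁)` is a ℤ-basis of the lattice `S₂(ℤ)` of symmetric 2×2 integer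
matrices, its Gram matrix with respect to `B` is the Cartan matrix of `F`, and hence
the root lattice of `F` with the bilinear form of the Cartan matrix
`[[2,-1,0],[-1,2,-2],[0,-2,2]]` is isometric to `S₂(ℤ)`. -/
theorem stmt_0 :
    (∀ N : Matrix (Fin 2) (Fin 2) ℤ, N.IsSymm →
      ∃! c : ℤ × ℤ × ℤ, N = c.1 • αm + c.2.1 • α0 + c.2.2 • α1) ∧
    B αm αm = 2 ∧ B α0 α0 = 2 ∧ B α1 α1 = 2 ∧
    B αm α0 = -1 ∧ B α0 αm = -1 ∧
    B αm α1 = 0 ∧ B α1 αm = 0 ∧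
    B α0 α1 = -2 ∧ B α1 α0 = -2 ∧
    (∀ x y z x' y' z' : ℤ,
      B (x • αm + y • α0 + z • α1) (x' • αm + y' • α0 + z' • α1) =
        dotProduct ![x, y, z]
          ((!![2, -1, 0; -1, 2, -2; 0, -2, 2]).mulVec ![x', y', z'])) := by
  refine ⟨?_, by decide, by decide, by decide, by decide, by decide, by decide, by decide,
    by decide, by decide, ?_⟩
  · intro N hN
    have hsym : N 1 0 = N 0 1 := by
      have := congrFun (congrFun hN 0) 1
      simpa [Matrix.transpose_apply] using this
    refine ⟨(-N 1 1, -N 1 1 - N 0 0, N 0 1 - N 1 1 - N 0 0), ?_, ?_⟩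
    · ext i j
      fin_cases i <;> fin_cases j <;>
        simp [αm, α0, α1, hsym] <;> ring
    · rintro ⟨x, y, z⟩ h
      have h00 := congrFun (congrFun h 0) 0
      have h01 := congrFun (congrFun h 0) 1
      have h11 := congrFun (congrFun h 1) 1
      simp [αm, α0, α1] at h00 h01 h11
      refine Prod.ext ?_ (Prod.ext ?_ ?_) <;> simp <;> omega
  · intro x y z x' y' z'
    simp [B, αm, α0, α1, dotProduct, Matrix.mulVec, Fin.sum_univ_succ]
    ring
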